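/- Let T be a contraction on a complex Hilbert space H and let H_0 = {h ∈ H : ‖T^n h‖ = ‖h‖ = ‖(T*)^n h‖ for all n ≥ 1}. Then the restriction of T to H_0 is a unitary operator on H_0. -/

import Mathlib

open ContinuousLinearMap Filter
open scoped InnerProductSpace

noncomputable section

lemma adjoint_apply_of_norm_eq
    {H : Type*} [NormedAddCommGroup H] [InnerProductSpace ℂ H] [CompleteSpace H]
    (T : H →L[ℂ] H) (hT : ‖T‖ ≤ 1) (h : H) (hn : ‖T h‖ = ‖h‖) :
    adjoint T (T h) = h := by
  have hadj : ‖adjoint T‖ ≤ 1 := by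
    rw [ContinuousLinearMap.adjoint.norm_map T]; exact hT
  have h1 : ‖adjoint T (T h)‖ ≤ ‖h‖ := by
    calc ‖adjoint T (T h)‖ ≤ ‖adjoint T‖ * ‖T h‖ := (adjoint T).le_opNorm _
    _ ≤ 1 * ‖h‖ := by
        rw [hn]; exact mul_le_mul_of_nonneg_right hadj (norm_nonneg _)
    _ = ‖h‖ := one_mul _
  have hre : RCLike.re ⟪adjoint T (T h), h⟫_ℂ = ‖h‖ ^ 2 := by
    rw [adjoint_inner_left, ← hn]
    simpa using (inner_self_eq_norm_sq (𝕜 := ℂ) (T h))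
  have hsq : ‖adjoint T (T h) - h‖ ^ 2 ≤ 0 := by
    rw [norm_sub_sq (𝕜 := ℂ), hre]
    nlinarith [norm_nonneg h, norm_nonneg (adjoint T (T h))]
  have : ‖adjoint T (T h) - h‖ = 0 := by
    nlinarith [norm_nonneg (adjoint T (T h) - h)]
  rw [← sub_eq_zero]
  exact norm_eq_zero.mp this

theorem restriction_to_unitary_part_is_unitary
    {H : Type*} [NormedAddCommGroup H] [InnerProductSpace ℂ H] [CompleteSpace H]
    (T : H →L[ℂ] H) (hT : ‖T‖ ≤ 1)
    (S : Set H)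
    (hS : S = {h : H | ∀ n : ℕ, 1 ≤ n →
        ‖(T ^ n) h‖ = ‖h‖ ∧ ‖((adjoint T) ^ n) h‖ = ‖h‖}) :
    (∀ h ∈ S, T h ∈ S ∧ ‖T h‖ = ‖h‖) ∧ (∀ h ∈ S, ∃ g ∈ S, T g = h) := by
  subst hS
  have hadj : ‖adjoint T‖ ≤ 1 := by
    rw [ContinuousLinearMap.adjoint.norm_map T]; exact hT
  -- key identities on S
  have hTsT : ∀ h ∈ {h : H | ∀ n : ℕ, 1 ≤ n →
      ‖(T ^ n) h‖ = ‖h‖ ∧ ‖((adjoint T) ^ n) h‖ = ‖h‖},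
      adjoint T (T h) = h := by
    intro h hh
    exact adjoint_apply_of_norm_eq T hT h (by simpa using (hh 1 le_rfl).1)
  have hTTs : ∀ h ∈ {h : H | ∀ n : ℕ, 1 ≤ n →
      ‖(T ^ n) h‖ = ‖h‖ ∧ ‖((adjoint T) ^ n) h‖ = ‖h‖},
      T (adjoint T h) = h := by
    intro h hh
    have := adjoint_apply_of_norm_eq (adjoint T) hadj h
      (by simpa using (hh 1 le_rfl).2)
    rwa [adjoint_adjoint] at this
  constructor
  · intro h hh
    have hTh : ‖T h‖ = ‖h‖ := by simpa using (hh 1 le_rfl).1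
    refine ⟨?_, hTh⟩
    intro n hn
    constructor
    · have : (T ^ n) (T h) = (T ^ (n + 1)) h := by
        rw [pow_succ, ContinuousLinearMap.mul_apply]
      rw [this, (hh (n + 1) (by omega)).1, hTh]
    · obtain ⟨m, rfl⟩ : ∃ m, n = m + 1 := ⟨n - 1, by omega⟩
      have : ((adjoint T) ^ (m + 1)) (T h) = ((adjoint T) ^ m) h := by
        rw [pow_succ, ContinuousLinearMap.mul_apply, hTsT h hh]
      rw [this, hTh]
      rcases Nat.eq_zero_or_pos m with hm | hm
      · subst hm; simp
      · exact (hh m hm).2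
  · intro h hh
    refine ⟨adjoint T h, ?_, hTTs h hh⟩
    have hTsh : ‖adjoint T h‖ = ‖h‖ := by simpa using (hh 1 le_rfl).2
    intro n hn
    constructor
    · obtain ⟨m, rfl⟩ : ∃ m, n = m + 1 := ⟨n - 1, by omega⟩
      have : (T ^ (m + 1)) (adjoint T h) = (T ^ m) h := by
        rw [pow_succ, ContinuousLinearMap.mul_apply, hTTs h hh]
      rw [this, hTsh]
      rcases Nat.eq_zero_or_pos m with hm | hm
      · subst hm; simp
      · exact (hh m hm).1
    · have : ((adjoint T) ^ n) (adjoint T h) = ((adjoint T) ^ (n + 1)) h := by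
        rw [pow_succ, ContinuousLinearMap.mul_apply]
      rw [this, (hh (n + 1) (by omega)).2, hTsh]
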